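/- Let G be a finite group and let h ∈ G with h ≠ 1. Let P_h be the G-poset on two disjoint copies G⁽¹⁾, G⁽²⁾ of G, with action g•x⁽ⁱ⁾ = (gx)⁽ⁱ⁾ for i = 1,2, and with the partial order whose only strict relations are g⁽¹⁾ < g⁽²⁾ and g⁽¹⁾ < (gh)⁽²⁾ for all g ∈ G. Then P_h is a finite free G-poset with xind P_h = 1: there exists a G-map P_h → Q_1 G (namely g⁽ⁱ⁾ ↦ (g, i−1)), but there is no G-map P_h → Q_0 G. -/

import Mathlib

/-- `f : P → G × {0,…,n}` is a `G`-map to the `G`-poset `Q_n G`, whose order is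
`(g,i) ≤ (h,j)` iff `(g,i) = (h,j)` or `i < j`, and whose action is `g • (h,i) = (g h, i)`. -/
def IsGMapToQ (G : Type*) [Group G] {P : Type*} [PartialOrder P] [MulAction G P]
    (n : ℕ) (f : P → G × Fin (n + 1)) : Prop :=
  (∀ p q : P, p ≤ q → f p = f q ∨ (f p).2 < (f q).2) ∧
  ∀ (g : G) (p : P), f (g • p) = (g * (f p).1, (f p).2)

/-- The ground set of the `G`-poset `P_h`: two copies of `G`, the copy of `g` in the first
(resp. second) copy being `(g, false)` (resp. `(g, true)`). -/
def Ph (G : Type*) (h : G) : Type _ := G × Bool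

/-- The order on `P_h`: the only strict relations are `g⁽¹⁾ < g⁽²⁾` and `g⁽¹⁾ < (g h)⁽²⁾`. -/
instance Ph.instPartialOrder (G : Type*) [Group G] (h : G) : PartialOrder (Ph G h) where
  le x y := x = y ∨ (x.2 = false ∧ y.2 = true ∧ (y.1 = x.1 ∨ y.1 = x.1 * h))
  le_refl x := Or.inl rfl
  le_trans := by
    rintro x y z (rfl | ⟨hx, hy, hr⟩) hyz
    · exact hyz
    · rcases hyz with rfl | ⟨hy', _, _⟩
      · exact Or.inr ⟨hx, hy, hr⟩
      · rw [hy] at hy'; simp at hy'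
  le_antisymm := by
    rintro x y (rfl | ⟨hx, hy, _⟩) hyx
    · rfl
    · rcases hyx with h' | ⟨hy', _, _⟩
      · exact h'.symm
      · rw [hy] at hy'; simp at hy'

/-- The `G`-action on `P_h`: `g • x⁽ⁱ⁾ = (g x)⁽ⁱ⁾`. -/
instance Ph.instSMul (G : Type*) [Group G] (h : G) : SMul G (Ph G h) :=
  ⟨fun g x => (g * x.1, x.2)⟩

instance Ph.instMulAction (G : Type*) [Group G] (h : G) : MulAction G (Ph G h) where
  one_smul x := by
    show ((1 : G) * x.1, x.2) = x
    simp only [one_mul]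
    rfl
  mul_smul g₁ g₂ x := by
    show (g₁ * g₂ * x.1, x.2) = (g₁ * (g₂ * x.1), x.2)
    rw [mul_assoc]

/-- `P_h` is a finite free `G`-poset with `xind P_h = 1`. -/
theorem stmt3 {G : Type*} [Group G] [Finite G] (h : G) (hh : h ≠ 1) :
    Finite (Ph G h) ∧
    (∀ (g : G) (p q : Ph G h), p ≤ q → g • p ≤ g • q) ∧
    (∀ (g : G) (p : Ph G h), g • p = p → g = 1) ∧
    (∃ f : Ph G h → G × Fin 2, IsGMapToQ G 1 f) ∧
    ¬ ∃ f : Ph G h → G × Fin 1, IsGMapToQ G 0 f := by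
  refine ⟨?_, ?_, ?_, ?_, ?_⟩
  · exact inferInstanceAs (Finite (G × Bool))
  · rintro g p q (rfl | ⟨h1, h2, h3⟩)
    · exact le_refl _
    · refine Or.inr ⟨h1, h2, ?_⟩
      show (g * q.1) = g * p.1 ∨ (g * q.1) = g * p.1 * h
      rcases h3 with h3 | h3
      · exact Or.inl (by rw [h3])
      · exact Or.inr (by rw [h3, mul_assoc])
  · intro g p hp
    have : g * p.1 = p.1 := congrArg Prod.fst hp
    exact mul_right_cancel (by rw [this, one_mul])
  · refine ⟨fun x => (x.1, if x.2 then 1 else 0), ?_, ?_⟩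
    · rintro p q (rfl | ⟨h1, h2, h3⟩)
      · exact Or.inl rfl
      · right
        show (if p.2 then (1:Fin 2) else 0) < (if q.2 then 1 else 0)
        rw [h1, h2]; decide
    · intro g p; rfl
  · rintro ⟨f, hmono, hequiv⟩
    have key : ∀ p q : Ph G h, p ≤ q → f p = f q := by
      intro p q hpq
      rcases hmono p q hpq with h1 | h1
      · exact h1
      · exact absurd h1 (by omega)
    let p0 : Ph G h := ((1 : G), false)
    let p1 : Ph G h := ((1 : G), true)
    let p2 : Ph G h := (h, true)
    have l1 : p0 ≤ p1 := Or.inr ⟨rfl, rfl, Or.inl rfl⟩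
    have l2 : p0 ≤ p2 := Or.inr ⟨rfl, rfl, Or.inr (one_mul h).symm⟩
    have e1 := key _ _ l1
    have e2 := key _ _ l2
    have e3 : p2 = h • p1 := by
      show _ = ((h * 1 : G), true); rw [mul_one]
    rw [e3, hequiv] at e2
    have key2 : (f p1).1 = h * (f p1).1 := by
      conv_lhs => rw [← e1]
      rw [e2]
    have : h = 1 := by
      have := mul_right_cancel (b := (f p1).1) (a := h) (c := 1) (by rw [one_mul, ← key2])
      exact this
    exact hh this
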